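/- A graph G on n vertices is the intersection graph of a family of axis-parallel p-dimensional boxes in ℝ^d (p ≤ d) if and only if G satisfies the p-slim box property in ℝ^d: there exist interval graphs F₁,…,F_d on V(G) with G = F₁ ∩ ⋯ ∩ F_d, and for every vertex v there is a set J_v ⊆ {1,…,d} of size d − p such that for each i ∈ J_v the neighborhood of v in F_i induces a complete subgraph of F_i. -/
import Mathlib


open Set

/-- An axis-parallel box in `ℝ^d`: a product of nonempty closed intervals. -/
def IsBoxIn (d : ℕ) (s : Set (Fin d → ℝ)) : Prop :=
  ∃ lo hi : Fin d → ℝ, (∀ i, lo i ≤ hi i) ∧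
    s = {x | ∀ i, x i ∈ Set.Icc (lo i) (hi i)}

/-- A `p`-box in `ℝ^d`: a product of nonempty closed intervals, exactly `d - p`
of which are degenerate (single points). -/
def IsPBoxIn (p d : ℕ) (s : Set (Fin d → ℝ)) : Prop :=
  ∃ lo hi : Fin d → ℝ, (∀ i, lo i ≤ hi i) ∧
    {i : Fin d | lo i = hi i}.ncard = d - p ∧
    s = {x | ∀ i, x i ∈ Set.Icc (lo i) (hi i)}

/-- A graph is an interval graph if it is the intersection graph of a family of
closed real intervals. -/
def IsIntervalGraph {V : Type*} (G : SimpleGraph V) : Prop :=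
  ∃ a b : V → ℝ, (∀ v, a v ≤ b v) ∧
    ∀ u v : V, u ≠ v →
      (G.Adj u v ↔ (Set.Icc (a u) (b u) ∩ Set.Icc (a v) (b v)).Nonempty)

/-- `G` is the intersection graph of a family of `p`-boxes in `ℝ^d`. -/
def RealizableAsPBoxes {V : Type*} (p d : ℕ) (G : SimpleGraph V) : Prop :=
  ∃ B : V → Set (Fin d → ℝ), (∀ v, IsPBoxIn p d (B v)) ∧
    ∀ u v : V, u ≠ v → (G.Adj u v ↔ (B u ∩ B v).Nonempty)

/-- `G` is the intersection graph of a family of (full) axis-parallel boxes in `ℝ^d`. -/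
def RealizableAsBoxes {V : Type*} (d : ℕ) (G : SimpleGraph V) : Prop :=
  ∃ B : V → Set (Fin d → ℝ), (∀ v, IsBoxIn d (B v)) ∧
    ∀ u v : V, u ≠ v → (G.Adj u v ↔ (B u ∩ B v).Nonempty)

/-- The intersection graph of a family of sets in `ℝ^d`. -/
def intersectionGraph {ι : Type*} {d : ℕ} (B : ι → Set (Fin d → ℝ)) : SimpleGraph ι :=
  SimpleGraph.fromRel fun i j => (B i ∩ B j).Nonempty

/-- The family `B` can be pierced by at most `n` points. -/
def Pierceable {ι : Type*} {d : ℕ} (B : ι → Set (Fin d → ℝ)) (n : ℕ) : Prop :=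
  ∃ P : Finset (Fin d → ℝ), P.card ≤ n ∧ ∀ i, ∃ p ∈ P, p ∈ B i

/-- The subfamily of `B` indexed by `S` can be pierced by at most `n` points. -/
def PierceableOn {ι : Type*} {d : ℕ} (B : ι → Set (Fin d → ℝ)) (S : Finset ι) (n : ℕ) : Prop :=
  ∃ P : Finset (Fin d → ℝ), P.card ≤ n ∧ ∀ i ∈ S, ∃ p ∈ P, p ∈ B i

/-- The cycle graph on `s` vertices, with vertex set `ZMod s`. -/
def cyc (s : ℕ) : SimpleGraph (ZMod s) := SimpleGraph.fromRel fun i j => j = i + 1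

/-- The boxicity of a graph, as an extended natural number. -/
noncomputable def boxicity {V : Type*} (G : SimpleGraph V) : ℕ∞ :=
  sInf {n : ℕ∞ | ∃ k : ℕ, n = k ∧ RealizableAsBoxes k G}

/-- The `p`-boxicity of a graph: the least `d ≥ p` such that `G` is realizable as
`p`-boxes in `ℝ^d` (possibly `∞`). -/
noncomputable def pboxicity {V : Type*} (p : ℕ) (G : SimpleGraph V) : ℕ∞ :=
  sInf {n : ℕ∞ | ∃ k : ℕ, n = k ∧ p ≤ k ∧ RealizableAsPBoxes p k G}


lemma icc_nonempty_iff {a b c d : ℝ} (h1 : a ≤ b) (h2 : c ≤ d) :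
    (Set.Icc a b ∩ Set.Icc c d).Nonempty ↔ a ≤ d ∧ c ≤ b := by
  rw [Set.Icc_inter_Icc, Set.nonempty_Icc, max_le_iff, le_min_iff, le_min_iff]
  constructor
  · rintro ⟨⟨_, h⟩, ⟨h', _⟩⟩; exact ⟨h, h'⟩
  · rintro ⟨h, h'⟩; exact ⟨⟨h1, h⟩, ⟨h', h2⟩⟩

lemma box_inter_nonempty {d : ℕ} (lo1 hi1 lo2 hi2 : Fin d → ℝ) :
    (({x | ∀ i, x i ∈ Set.Icc (lo1 i) (hi1 i)} : Set (Fin d → ℝ)) ∩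
        {x | ∀ i, x i ∈ Set.Icc (lo2 i) (hi2 i)}).Nonempty ↔
      ∀ i, (Set.Icc (lo1 i) (hi1 i) ∩ Set.Icc (lo2 i) (hi2 i)).Nonempty := by
  constructor
  · rintro ⟨x, hx1, hx2⟩ i
    exact ⟨x i, hx1 i, hx2 i⟩
  · intro h
    exact ⟨fun i => (h i).choose, fun i => (h i).choose_spec.1, fun i => (h i).choose_spec.2⟩

lemma realizable_of_rep {V : Type*} (p d : ℕ) (G : SimpleGraph V)
    (lo hi : V → Fin d → ℝ) (h1 : ∀ v i, lo v i ≤ hi v i)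
    (h2 : ∀ v, {i : Fin d | lo v i = hi v i}.ncard = d - p)
    (h3 : ∀ u v : V, u ≠ v → (G.Adj u v ↔
      ∀ i, (Set.Icc (lo u i) (hi u i) ∩ Set.Icc (lo v i) (hi v i)).Nonempty)) :
    RealizableAsPBoxes p d G := by
  refine ⟨fun v => {x | ∀ i, x i ∈ Set.Icc (lo v i) (hi v i)},
    fun v => ⟨fun i => lo v i, fun i => hi v i, h1 v, h2 v, rfl⟩,
    fun u v huv => (h3 u v huv).trans (box_inter_nonempty (lo u) (hi u) (lo v) (hi v)).symm⟩

/-- `G` is realizable as `p`-boxes in `ℝ^d` iff it has the `p`-slim box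
property in `ℝ^d`. -/
theorem realizable_as_pboxes_iff_slim {V : Type*} [Fintype V] (p d : ℕ) (hpd : p ≤ d)
    (G : SimpleGraph V) :
    RealizableAsPBoxes p d G ↔
      ∃ F : Fin d → SimpleGraph V, (∀ i, IsIntervalGraph (F i)) ∧ G = (⨅ i, F i) ∧
        ∀ v : V, ∃ J : Finset (Fin d), J.card = d - p ∧
          ∀ i ∈ J, ∀ u w : V, (F i).Adj v u → (F i).Adj v w → u ≠ w → (F i).Adj u w := by
  constructor
  · rintro ⟨B, hB, hBadj⟩
    choose lo hi hlohi hdeg hBeq using hB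
    refine ⟨fun i => SimpleGraph.fromRel fun u v =>
        (Set.Icc (lo u i) (hi u i) ∩ Set.Icc (lo v i) (hi v i)).Nonempty, ?_, ?_, ?_⟩
    · intro i
      refine ⟨fun v => lo v i, fun v => hi v i, fun v => hlohi v i, fun u v huv => ?_⟩
      rw [SimpleGraph.fromRel_adj]
      constructor
      · rintro ⟨-, h | h⟩
        · exact h
        · rwa [Set.inter_comm]
      · intro h; exact ⟨huv, Or.inl h⟩
    · ext u v
      rw [SimpleGraph.iInf_adj]
      constructor
      · intro h
        have huv := h.ne
        refine ⟨fun i => ?_, huv⟩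
        rw [SimpleGraph.fromRel_adj]
        have hne := (hBadj u v huv).mp h
        rw [hBeq u, hBeq v, box_inter_nonempty] at hne
        exact ⟨huv, Or.inl (hne i)⟩
      · rintro ⟨h, huv⟩
        rw [hBadj u v huv, hBeq u, hBeq v, box_inter_nonempty]
        intro i
        rcases (SimpleGraph.fromRel_adj _ _ _).mp (h i) with ⟨-, hh | hh⟩
        · exact hh
        · rwa [Set.inter_comm] at hh
    · intro v
      refine ⟨(Set.toFinite {i : Fin d | lo v i = hi v i}).toFinset, ?_, ?_⟩
      · rw [← Set.ncard_eq_toFinset_card _, hdeg v]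
      · intro i hi' u w hvu hvw huw
        rw [Set.Finite.mem_toFinset, Set.mem_setOf_eq] at hi'
        rw [SimpleGraph.fromRel_adj]
        refine ⟨huw, Or.inl ?_⟩
        have key : ∀ u' : V,
            (Set.Icc (lo v i) (hi v i) ∩ Set.Icc (lo u' i) (hi u' i)).Nonempty →
              lo v i ∈ Set.Icc (lo u' i) (hi u' i) := by
          rintro u' ⟨t, ht1, ht2⟩
          have ht : t = lo v i := le_antisymm (hi' ▸ ht1.2) ht1.1
          rwa [ht] at ht2
        have hu : lo v i ∈ Set.Icc (lo u i) (hi u i) := by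
          rcases (SimpleGraph.fromRel_adj _ _ _).mp hvu with ⟨-, hh | hh⟩
          · exact key u hh
          · exact key u (by rwa [Set.inter_comm] at hh)
        have hw : lo v i ∈ Set.Icc (lo w i) (hi w i) := by
          rcases (SimpleGraph.fromRel_adj _ _ _).mp hvw with ⟨-, hh | hh⟩
          · exact key w hh
          · exact key w (by rwa [Set.inter_comm] at hh)
        exact ⟨lo v i, hu, hw⟩
  · rintro ⟨F, hFint, hG, hslim⟩
    classical
    choose a b hab using hFint
    have ha : ∀ i v, a i v ≤ b i v := fun i => (hab i).1
    have hiff : ∀ i (u v : V), u ≠ v →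
        ((F i).Adj u v ↔ a i u ≤ b i v ∧ a i v ≤ b i u) := by
      intro i u v huv
      rw [(hab i).2 u v huv, icc_nonempty_iff (ha i u) (ha i v)]
    choose J hJcard hJ using hslim
    obtain ⟨N, hNmem⟩ : ∃ N : Fin d → V → Finset V,
        ∀ i v u, u ∈ N i v ↔ (u = v ∨ (F i).Adj v u) :=
      ⟨fun i v => Finset.univ.filter fun u => u = v ∨ (F i).Adj v u,
        fun i v u => by simp⟩
    -- the piercing point for simplicial coordinates
    have hcex : ∀ (v : V) (i : Fin d), ∃ cv : ℝ,
        (∃ w ∈ N i v, cv = a i w) ∧ ∀ u ∈ N i v, a i u ≤ cv := by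
      intro v i
      have hne : ((N i v).image (a i)).Nonempty :=
        ⟨a i v, Finset.mem_image_of_mem _ ((hNmem i v v).mpr (Or.inl rfl))⟩
      obtain ⟨w, hw, hwv⟩ := Finset.mem_image.mp (Finset.max'_mem _ hne)
      exact ⟨_, ⟨w, hw, hwv.symm⟩, fun u hu => Finset.le_max' _ _ (Finset.mem_image_of_mem _ hu)⟩
    choose c hcw hcub using hcex
    have hcmem : ∀ i (v : V), i ∈ J v → ∀ u ∈ N i v,
        c v i ∈ Set.Icc (a i u) (b i u) := by
      intro i v hiJ u hu
      refine ⟨hcub v i u hu, ?_⟩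
      obtain ⟨w, hw, hwa⟩ := hcw v i
      rw [hwa]
      by_cases hwu : w = u
      · subst hwu; exact ha i w
      · have hadj : (F i).Adj w u := by
          rcases (hNmem i v w).mp hw with hwv | hvw
          · rcases (hNmem i v u).mp hu with huv | hvu
            · exact absurd (hwv.trans huv.symm) hwu
            · rw [hwv]; exact hvu
          · rcases (hNmem i v u).mp hu with huv | hvu
            · rw [huv]; exact hvw.symm
            · exact hJ v i hiJ w u hvw hvu hwu
        exact ((hiff i w u hwu).mp hadj).1
    have hNsub : ∀ i (u v : V), i ∈ J u → (F i).Adj u v → N i u ⊆ N i v := by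
      intro i u v hiJ huv w hw
      rcases (hNmem i u w).mp hw with hwu | huw
      · exact (hNmem i v w).mpr (Or.inr (hwu ▸ huv.symm))
      · by_cases hwv : w = v
        · exact (hNmem i v w).mpr (Or.inl hwv)
        · exact (hNmem i v w).mpr
            (Or.inr (hJ u i hiJ v w huv huw (fun h => hwv h.symm)))
    have hceq : ∀ i (u v : V), i ∈ J u → i ∈ J v → (F i).Adj u v → c u i = c v i := by
      intro i u v hu hv hadj
      have hNeq : N i u = N i v :=
        Finset.Subset.antisymm (hNsub i u v hu hadj) (hNsub i v u hv hadj.symm)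
      refine le_antisymm ?_ ?_
      · obtain ⟨w, hw, hwa⟩ := hcw u i
        rw [hwa]
        exact hcub v i w (hNeq ▸ hw)
      · obtain ⟨w, hw, hwa⟩ := hcw v i
        rw [hwa]
        exact hcub u i w (hNeq ▸ hw)
    -- the fattening amounts
    have hepsex : ∀ i : Fin d, ∃ e : ℝ, 0 < e ∧
        ∀ u v : V, b i v < a i u → b i v + e < a i u := by
      intro i
      set g : Finset ℝ := (Finset.univ.filter fun pq : V × V => b i pq.2 < a i pq.1).image
        fun pq => a i pq.1 - b i pq.2 with hg
      by_cases hgne : g.Nonempty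
      · refine ⟨g.min' hgne / 2, ?_, ?_⟩
        · obtain ⟨pq, hpq, hval⟩ := Finset.mem_image.mp (g.min'_mem hgne)
          have h2 := (Finset.mem_filter.mp hpq).2
          have : 0 < g.min' hgne := by rw [← hval]; linarith
          linarith
        · intro u v huv
          have hmem : a i u - b i v ∈ g :=
            Finset.mem_image.mpr ⟨(u, v), Finset.mem_filter.mpr ⟨Finset.mem_univ _, huv⟩, rfl⟩
          have h1 := g.min'_le _ hmem
          have h2 : 0 < g.min' hgne := by
            obtain ⟨pq, hpq, hval⟩ := Finset.mem_image.mp (g.min'_mem hgne)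
            have := (Finset.mem_filter.mp hpq).2
            rw [← hval]; linarith
          linarith
      · refine ⟨1, one_pos, fun u v huv => ?_⟩
        exact absurd (Finset.mem_image.mpr
          ⟨(u, v), Finset.mem_filter.mpr ⟨Finset.mem_univ _, huv⟩, rfl⟩)
          (fun h => hgne ⟨_, h⟩)
    choose eps heps_pos heps_lt using hepsex
    have hlohi : ∀ (v : V) (i : Fin d),
        (if i ∈ J v then c v i else a i v) ≤ (if i ∈ J v then c v i else b i v + eps i) := by
      intro v i
      by_cases h : i ∈ J v
      · simp [h]
      · simp only [if_neg h]
        have := ha i v; have := heps_pos i; linarith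
    have mixed : ∀ i (u v : V), u ≠ v → i ∈ J u → i ∉ J v →
        ((F i).Adj u v ↔ c u i ≤ b i v + eps i ∧ a i v ≤ c u i) := by
      intro i u v huv hu hv
      constructor
      · intro hadj
        have hvy : v ∈ N i u := (hNmem i u v).mpr (Or.inr hadj)
        have hcm := hcmem i u hu v hvy
        have := heps_pos i
        exact ⟨by linarith [hcm.2], hcm.1⟩
      · rintro ⟨h1, h2⟩
        by_contra hadj
        rw [hiff i u v huv] at hadj
        have hcu_mem : c u i ∈ Set.Icc (a i u) (b i u) :=
          hcmem i u hu u ((hNmem i u u).mpr (Or.inl rfl))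
        rcases not_and_or.mp hadj with h | h
        · have hlt : b i v < a i u := not_le.mp h
          have := heps_lt i u v hlt
          linarith [hcu_mem.1]
        · have hlt : b i u < a i v := not_le.mp h
          linarith [hcu_mem.2]
    have key : ∀ i (u v : V), u ≠ v → ((F i).Adj u v ↔
        (Set.Icc (if i ∈ J u then c u i else a i u) (if i ∈ J u then c u i else b i u + eps i) ∩
          Set.Icc (if i ∈ J v then c v i else a i v)
            (if i ∈ J v then c v i else b i v + eps i)).Nonempty) := by
      intro i u v huv
      rw [icc_nonempty_iff (hlohi u i) (hlohi v i)]
      by_cases hu : i ∈ J u <;> by_cases hv : i ∈ J v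
      · simp only [if_pos hu, if_pos hv]
        constructor
        · intro hadj
          have := hceq i u v hu hv hadj
          exact ⟨this.le, this.ge⟩
        · rintro ⟨h1, h2⟩
          have hceqv : c u i = c v i := le_antisymm h1 h2
          have h3 := hcmem i u hu u ((hNmem i u u).mpr (Or.inl rfl))
          have h4 := hcmem i v hv v ((hNmem i v v).mpr (Or.inl rfl))
          rw [hiff i u v huv]
          rw [hceqv] at h3
          exact ⟨le_trans h3.1 h4.2, le_trans h4.1 h3.2⟩
      · simp only [if_pos hu, if_neg hv]
        exact mixed i u v huv hu hv
      · simp only [if_neg hu, if_pos hv]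
        rw [SimpleGraph.adj_comm, mixed i v u huv.symm hv hu, and_comm]
      · simp only [if_neg hu, if_neg hv]
        rw [hiff i u v huv]
        have hep := heps_pos i
        constructor
        · rintro ⟨h1, h2⟩; exact ⟨by linarith, by linarith⟩
        · rintro ⟨h1, h2⟩
          constructor
          · by_contra h; have := heps_lt i u v (not_le.mp h); linarith
          · by_contra h; have := heps_lt i v u (not_le.mp h); linarith
    refine realizable_of_rep p d G (fun v i => if i ∈ J v then c v i else a i v)
      (fun v i => if i ∈ J v then c v i else b i v + eps i) hlohi ?_ ?_
    · intro v
      have hset : {i : Fin d | (if i ∈ J v then c v i else a i v) =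
          (if i ∈ J v then c v i else b i v + eps i)} = ↑(J v) := by
        ext i
        by_cases h : i ∈ J v
        · simp [h]
        · simp only [Set.mem_setOf_eq, if_neg h, Finset.mem_coe]
          exact iff_of_false
            (by have := ha i v; have := heps_pos i; intro heq; linarith) h
      rw [hset, Set.ncard_coe_finset, hJcard]
    · intro u v huv
      rw [hG, SimpleGraph.iInf_adj]
      constructor
      · rintro ⟨h, -⟩ i; exact (key i u v huv).mp (h i)
      · intro h; exact ⟨fun i => (key i u v huv).mpr (h i), huv⟩
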